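/- Let a ≤ 0 ≤ b with b − a ≥ 1 and −ab ≤ 1, and let x be irrational with (a,b)-continued fraction digits (n_i) and convergents r_k = p_k/q_k defined by the minus continued fraction recurrences. Then r_k → x as k → ∞. -/

import Mathlib

open Filter Topology

/-- The generalized integer part `⌊x⌉_{a,b}`. -/
noncomputable def gfloor (a b x : ℝ) : ℤ :=
  if x < a then ⌊x - a⌋ else if x < b then 0 else ⌊x - b⌋ + 1

/-- The sequence `x₀ = x`, `x_{i+1} = -1/(x_i - ⌊x_i⌉_{a,b})`. -/
noncomputable def xseq (a b x : ℝ) : ℕ → ℝ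
  | 0 => x
  | i + 1 => -1 / (xseq a b x i - (gfloor a b (xseq a b x i) : ℝ))

/-- The digits `n_i = ⌊x_i⌉_{a,b}` of the (a,b)-continued fraction of `x`. -/
noncomputable def dig (a b x : ℝ) (i : ℕ) : ℤ := gfloor a b (xseq a b x i)

/-- Numerators: `pfun n (k+2) = p_k`, `p_{-2}=0`, `p_{-1}=1`, `p_k = n_k p_{k-1} - p_{k-2}`. -/
noncomputable def pfun (n : ℕ → ℤ) : ℕ → ℤ
  | 0 => 0
  | 1 => 1
  | k + 2 => n k * pfun n (k + 1) - pfun n k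

/-- Denominators: `qfun n (k+2) = q_k`, `q_{-2}=-1`, `q_{-1}=0`, `q_k = n_k q_{k-1} - q_{k-2}`. -/
noncomputable def qfun (n : ℕ → ℤ) : ℕ → ℤ
  | 0 => -1
  | 1 => 0
  | k + 2 => n k * qfun n (k + 1) - qfun n k

namespace ABCF

/-- t_i = x_i - n_i -/
noncomputable def tse (a b x : ℝ) (i : ℕ) : ℝ := xseq a b x i - (dig a b x i : ℝ)

/-- E_m = q_m x - p_m -/
noncomputable def Efun (a b x : ℝ) (k : ℕ) : ℝ :=
  (qfun (dig a b x) k : ℝ) * x - (pfun (dig a b x) k : ℝ)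

variable {a b x : ℝ}

lemma dig_eq (i : ℕ) : dig a b x i = gfloor a b (xseq a b x i) := rfl

lemma xseq_succ (i : ℕ) : xseq a b x (i+1) = -1 / tse a b x i := rfl

lemma gfloor_of_lt {y : ℝ} (h : y < a) : gfloor a b y = ⌊y - a⌋ := if_pos h

lemma gfloor_of_ge (hab : 1 ≤ b - a) {y : ℝ} (h : b ≤ y) : gfloor a b y = ⌊y - b⌋ + 1 := by
  unfold gfloor
  rw [if_neg (by linarith), if_neg (by linarith)]

lemma sub_gfloor_mem (hab : 1 ≤ b - a) (y : ℝ) :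
    a ≤ y - (gfloor a b y : ℝ) ∧ y - (gfloor a b y : ℝ) < b := by
  unfold gfloor
  split_ifs with h1 h2
  · push_cast
    constructor
    · nlinarith [Int.floor_le (y - a)]
    · nlinarith [Int.lt_floor_add_one (y - a)]
  · push_cast
    constructor
    · simp only [Int.cast_zero, sub_zero]; exact le_of_not_gt h1
    · simp only [Int.cast_zero, sub_zero]; exact h2
  · push_cast
    constructor
    · nlinarith [Int.floor_le (y - b)]
    · nlinarith [Int.lt_floor_add_one (y - b)]

lemma tse_mem (hab : 1 ≤ b - a) (i : ℕ) :
    a ≤ tse a b x i ∧ tse a b x i < b := sub_gfloor_mem hab _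

lemma irrational_inv {z : ℝ} (h : Irrational z) : Irrational z⁻¹ := by
  rcases eq_or_ne z 0 with rfl | hz
  · simpa using h
  · rintro ⟨q, hq⟩
    exact h ⟨q⁻¹, by push_cast; rw [hq, inv_inv]⟩

lemma xseq_irr (hx : Irrational x) (i : ℕ) : Irrational (xseq a b x i) := by
  induction i with
  | zero => exact hx
  | succ i ih =>
    rw [xseq_succ]
    have : Irrational (tse a b x i) := ih.sub_intCast _
    rw [neg_div, one_div]
    exact (irrational_inv this).neg

lemma tse_irr (hx : Irrational x) (i : ℕ) : Irrational (tse a b x i) :=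
  (xseq_irr hx i).sub_intCast _

lemma tse_ne_zero (hx : Irrational x) (i : ℕ) : tse a b x i ≠ 0 :=
  (tse_irr hx i).ne_zero

end ABCF

namespace ABCF

variable {a b x : ℝ}

/-- After a negative t, the next point is ≥ b and the digit is ≥ 1. -/
lemma neg_step (ha : a ≤ 0) (hb : 0 ≤ b) (hab : 1 ≤ b - a) (hprod : -(a*b) ≤ 1)
    (i : ℕ) (hti : tse a b x i < 0) :
    b ≤ xseq a b x (i+1) ∧ dig a b x (i+1) = ⌊xseq a b x (i+1) - b⌋ + 1 ∧
      1 ≤ dig a b x (i+1) ∧ b - 1 ≤ tse a b x (i+1) := by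
  have hta : a ≤ tse a b x i := (tse_mem hab i).1
  have ha' : a < 0 := lt_of_le_of_lt hta hti
  have hXpos : xseq a b x (i+1) = 1 / (-(tse a b x i)) := by
    rw [xseq_succ]; ring
  have h1 : 1 / (-a) ≤ 1 / (-(tse a b x i)) := by
    apply one_div_le_one_div_of_le (by linarith) (by linarith)
  have h2 : b ≤ 1 / (-a) := by
    rw [le_div_iff₀ (by linarith : (0:ℝ) < -a)]
    nlinarith
  have hXb : b ≤ xseq a b x (i+1) := by rw [hXpos]; linarith
  have hdig : dig a b x (i+1) = ⌊xseq a b x (i+1) - b⌋ + 1 := by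
    rw [dig_eq]; exact gfloor_of_ge hab hXb
  refine ⟨hXb, hdig, ?_, ?_⟩
  · have : (0:ℤ) ≤ ⌊xseq a b x (i+1) - b⌋ := Int.floor_nonneg.mpr (by linarith)
    omega
  · have hfl : (⌊xseq a b x (i+1) - b⌋ : ℝ) ≤ xseq a b x (i+1) - b :=
      Int.floor_le _
    unfold tse
    rw [hdig]
    push_cast
    linarith

/-- After a positive t, the next point is < a and the digit is ≤ -1. -/
lemma pos_step (ha : a ≤ 0) (hb : 0 ≤ b) (hab : 1 ≤ b - a) (hprod : -(a*b) ≤ 1)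
    (i : ℕ) (hti : 0 < tse a b x i) :
    xseq a b x (i+1) < a ∧ dig a b x (i+1) = ⌊xseq a b x (i+1) - a⌋ ∧
      dig a b x (i+1) ≤ -1 ∧ tse a b x (i+1) < a + 1 ∧ a ≤ tse a b x (i+1) := by
  have htb : tse a b x i < b := (tse_mem hab i).2
  have hb' : 0 < b := lt_trans hti htb
  have hXeq : xseq a b x (i+1) = -(1 / tse a b x i) := by
    rw [xseq_succ]; ring
  have h1 : 1 / b < 1 / tse a b x i := by
    apply one_div_lt_one_div_of_lt hti htb
  have h2 : -(1/b) ≤ a := by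
    rw [neg_le_iff_add_nonneg, ← sub_nonneg]
    have : (a + 1/b) * b = a*b + 1 := by field_simp
    nlinarith [mul_pos hb' hb']
  have hXa : xseq a b x (i+1) < a := by
    rw [hXeq]; linarith
  have hdig : dig a b x (i+1) = ⌊xseq a b x (i+1) - a⌋ := by
    rw [dig_eq]; exact gfloor_of_lt hXa
  have hfl : (⌊xseq a b x (i+1) - a⌋ : ℝ) ≤ xseq a b x (i+1) - a := Int.floor_le _
  have hfl2 : xseq a b x (i+1) - a < ⌊xseq a b x (i+1) - a⌋ + 1 := Int.lt_floor_add_one _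
  refine ⟨hXa, hdig, ?_, ?_, ?_⟩
  · have : (⌊xseq a b x (i+1) - a⌋ : ℝ) < 0 := by linarith
    have h0 : ⌊xseq a b x (i+1) - a⌋ < 0 := by exact_mod_cast this
    omega
  · unfold tse; rw [hdig]; linarith
  · unfold tse; rw [hdig]; linarith

/-- Two negatives in a row force a digit ≥ 2. -/
lemma negneg_step (ha : a ≤ 0) (hb : 0 ≤ b) (hab : 1 ≤ b - a) (hprod : -(a*b) ≤ 1)
    (i : ℕ) (h0 : tse a b x i < 0) (h1 : tse a b x (i+1) < 0) :
    2 ≤ dig a b x (i+2) := by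
  obtain ⟨_, _, _, htlb⟩ := neg_step ha hb hab hprod i h0
  -- t_{i+1} ∈ [b-1, 0), so b < 1
  have hb1 : b < 1 := by linarith
  have hX2 : xseq a b x (i+2) = 1 / (-(tse a b x (i+1))) := by rw [xseq_succ]; ring
  have hstep : 1 / (1 - b) ≤ 1 / (-(tse a b x (i+1))) :=
    one_div_le_one_div_of_le (by linarith) (by linarith)
  have hgeb : 1 + b ≤ 1 / (1 - b) := by
    rw [le_div_iff₀ (by linarith : (0:ℝ) < 1 - b)]
    nlinarith
  have hX2b : 1 + b ≤ xseq a b x (i+2) := by rw [hX2]; linarith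
  obtain ⟨_, hdig2, _, _⟩ := neg_step ha hb hab hprod (i+1) h1
  rw [show i+1+1 = i+2 from rfl] at hdig2
  rw [hdig2]
  have : (1:ℤ) ≤ ⌊xseq a b x (i+2) - b⌋ := by
    apply Int.le_floor.mpr
    push_cast
    linarith
  omega

/-- Two positives in a row force a digit ≤ -2. -/
lemma pospos_step (ha : a ≤ 0) (hb : 0 ≤ b) (hab : 1 ≤ b - a) (hprod : -(a*b) ≤ 1)
    (i : ℕ) (h0 : 0 < tse a b x i) (h1 : 0 < tse a b x (i+1)) :
    dig a b x (i+2) ≤ -2 := by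
  obtain ⟨_, _, _, htub, _⟩ := pos_step ha hb hab hprod i h0
  have ha1 : 0 < a + 1 := lt_trans h1 (by linarith)
  have hX2 : xseq a b x (i+2) = -(1 / tse a b x (i+1)) := by rw [xseq_succ]; ring
  have hstep : 1 / (a+1) < 1 / tse a b x (i+1) :=
    one_div_lt_one_div_of_lt h1 (by linarith)
  have hgeb : 1 - a ≤ 1 / (a+1) := by
    rw [le_div_iff₀ ha1]
    nlinarith
  have hX2a : xseq a b x (i+2) < a - 1 := by rw [hX2]; nlinarith
  obtain ⟨_, hdig2, _, _, _⟩ := pos_step ha hb hab hprod (i+1) h1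
  rw [show i+1+1 = i+2 from rfl] at hdig2
  rw [hdig2]
  have : (⌊xseq a b x (i+2) - a⌋ : ℝ) ≤ xseq a b x (i+2) - a := Int.floor_le _
  have h2 : (⌊xseq a b x (i+2) - a⌋ : ℝ) < -1 := by linarith
  have h3 : ⌊xseq a b x (i+2) - a⌋ < -1 := by exact_mod_cast h2
  omega

/-- In a same-sign step, |t_{i+1}| ≤ 1. -/
lemma same_sign_small (ha : a ≤ 0) (hb : 0 ≤ b) (hab : 1 ≤ b - a) (hprod : -(a*b) ≤ 1)
    (i : ℕ) (h : 0 < tse a b x (i+1) * tse a b x i) : |tse a b x (i+1)| ≤ 1 := by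
  rcases mul_pos_iff.mp h with ⟨hp1, hp0⟩ | ⟨hn1, hn0⟩
  · obtain ⟨_, _, _, htub, _⟩ := pos_step ha hb hab hprod i hp0
    rw [abs_of_pos hp1]; linarith
  · obtain ⟨_, _, _, htlb⟩ := neg_step ha hb hab hprod i hn0
    rw [abs_of_neg hn1]; linarith

/-- digit sign dichotomy -/
lemma dig_pos_iff (ha : a ≤ 0) (hb : 0 ≤ b) (hab : 1 ≤ b - a) (hprod : -(a*b) ≤ 1)
    (hx : Irrational x) (i : ℕ) : 1 ≤ dig a b x (i+1) ↔ tse a b x i < 0 := by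
  constructor
  · intro hd
    rcases lt_trichotomy (tse a b x i) 0 with h | h | h
    · exact h
    · exact absurd h (tse_ne_zero hx i)
    · have := (pos_step ha hb hab hprod i h).2.2.1; omega
  · intro h; exact (neg_step ha hb hab hprod i h).2.2.1

lemma dig_neg_iff (ha : a ≤ 0) (hb : 0 ≤ b) (hab : 1 ≤ b - a) (hprod : -(a*b) ≤ 1)
    (hx : Irrational x) (i : ℕ) : dig a b x (i+1) ≤ -1 ↔ 0 < tse a b x i := by
  constructor
  · intro hd
    rcases lt_trichotomy (tse a b x i) 0 with h | h | h
    · have := (neg_step ha hb hab hprod i h).2.2.1; omega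
    · exact absurd h (tse_ne_zero hx i)
    · exact h
  · intro h; exact (pos_step ha hb hab hprod i h).2.2.1

lemma dig_ne_zero (ha : a ≤ 0) (hb : 0 ≤ b) (hab : 1 ≤ b - a) (hprod : -(a*b) ≤ 1)
    (hx : Irrational x) (i : ℕ) : dig a b x (i+1) ≠ 0 := by
  rcases lt_trichotomy (tse a b x i) 0 with h | h | h
  · have := (neg_step ha hb hab hprod i h).2.2.1; omega
  · exact absurd h (tse_ne_zero hx i)
  · have := (pos_step ha hb hab hprod i h).2.2.1; omega

end ABCF

namespace ABCF

lemma qdet (n : ℕ → ℤ) : ∀ k, pfun n (k+1) * qfun n (k+2) - pfun n (k+2) * qfun n (k+1) = 1 := by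
  intro k
  induction k with
  | zero => simp [pfun, qfun]
  | succ k ih =>
    have hp : pfun n (k+3) = n (k+1) * pfun n (k+2) - pfun n (k+1) := rfl
    have hq : qfun n (k+3) = n (k+1) * qfun n (k+2) - qfun n (k+1) := rfl
    rw [hp, hq]; linear_combination ih

lemma qinv (n : ℕ → ℤ) (h1 : ∀ k, n (k+1) ≠ 0)
    (h2 : ∀ k, n (k+2) = 1 → n (k+1) < 0)
    (h3 : ∀ k, n (k+2) = -1 → 0 < n (k+1)) :
    ∀ k, 1 ≤ |qfun n (k+2)| ∧ |qfun n (k+2)| ≤ |qfun n (k+3)| ∧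
      (0 < n (k+1) ↔ 0 < qfun n (k+3) * qfun n (k+2)) := by
  intro k
  induction k with
  | zero =>
    have e2 : qfun n 2 = 1 := by simp [qfun]
    have e3 : qfun n 3 = n 1 := by
      show n 1 * qfun n 2 - qfun n 1 = n 1
      rw [e2]; simp [qfun]
    rw [e2, e3]
    refine ⟨by simp, by simpa using Int.one_le_abs (h1 0), by simp⟩
  | succ k ih =>
    obtain ⟨hA1, hAB, hiff⟩ := ih
    set A := qfun n (k+2) with hAdef
    set B := qfun n (k+3) with hBdef
    have hC : qfun n (k+1+3) = n (k+2) * B - A := rfl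
    have hB1 : 1 ≤ |B| := le_trans hA1 hAB
    have hBsq : 1 ≤ B^2 := by nlinarith [sq_abs B]
    have hABs : |A*B| ≤ B^2 := by
      rw [abs_mul]; nlinarith [abs_nonneg A, sq_abs B]
    have habs := abs_le.mp hABs
    have hne : n (k+2) ≠ 0 := h1 (k+1)
    have key : (0 < n (k+2) → B^2 ≤ qfun n (k+1+3) * B) ∧
        (n (k+2) < 0 → qfun n (k+1+3) * B ≤ -B^2) := by
      constructor
      · intro hn
        rcases eq_or_lt_of_le (by omega : (1:ℤ) ≤ n (k+2)) with h|h
        · -- n = 1 : then n(k+1) < 0 so A*B ≤ 0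
          have hneg : ¬ (0 < B * A) := by
            intro hBA
            have := hiff.mpr hBA
            have := h2 k h.symm
            omega
          have : B * A ≤ 0 := le_of_not_gt hneg
          rw [hC, ← h]; nlinarith
        · have hn2 : 2 ≤ n (k+2) := h
          rw [hC]; nlinarith [sq_nonneg B]
      · intro hn
        rcases eq_or_lt_of_le (by omega : n (k+2) ≤ -1) with h|h
        · -- n = -1 : then n(k+1) > 0 so 0 < B*A
          have hpos : 0 < B * A := hiff.mp (h3 k h)
          rw [hC, h]; nlinarith
        · have hn2 : n (k+2) ≤ -2 := by omega
          rw [hC]; nlinarith [sq_nonneg B]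
    have hBC : |B| ≤ |qfun n (k+1+3)| := by
      have h1' : B^2 ≤ |qfun n (k+1+3) * B| := by
        rcases lt_or_gt_of_ne hne with hn|hn
        · have := key.2 hn
          calc B^2 ≤ -(qfun n (k+1+3) * B) := by linarith
          _ ≤ |qfun n (k+1+3) * B| := neg_le_abs _
        · have := key.1 hn
          calc B^2 ≤ qfun n (k+1+3) * B := this
          _ ≤ |qfun n (k+1+3) * B| := le_abs_self _
      rw [abs_mul] at h1'
      have hBpos : 0 < |B| := by omega
      have : |B| * |B| ≤ |qfun n (k+1+3)| * |B| := by nlinarith [sq_abs B]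
      exact le_of_mul_le_mul_right this hBpos
    refine ⟨hB1, hBC, ?_⟩
    constructor
    · intro hn
      have := key.1 hn
      nlinarith
    · intro hQ
      rcases lt_or_gt_of_ne hne with hn|hn
      · have := key.2 hn; nlinarith
      · exact hn

lemma qgrow (n : ℕ → ℤ) (h1 : ∀ k, n (k+1) ≠ 0)
    (h2 : ∀ k, n (k+2) = 1 → n (k+1) < 0)
    (h3 : ∀ k, n (k+2) = -1 → 0 < n (k+1)) :
    ∀ k, n (k+2) * n (k+1) < 0 → |qfun n (k+3)| + 1 ≤ |qfun n (k+4)| := by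
  intro k hk
  obtain ⟨hA1, hAB, hiff⟩ := qinv n h1 h2 h3 k
  set A := qfun n (k+2) with hAdef
  set B := qfun n (k+3) with hBdef
  have hB1 : 1 ≤ |B| := le_trans hA1 hAB
  have hC : qfun n (k+4) = n (k+2) * B - A := rfl
  have hBA1 : |B| ≤ |B * A| := by
    rw [abs_mul]; nlinarith [abs_nonneg B]
  have hAne : A ≠ 0 := abs_pos.mp (lt_of_lt_of_le Int.zero_lt_one hA1)
  have hBne : B ≠ 0 := abs_pos.mp (lt_of_lt_of_le Int.zero_lt_one hB1)
  have hBAne : B * A ≠ 0 := mul_ne_zero hBne hAne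
  have key : B^2 + |B| ≤ |qfun n (k+4) * B| := by
    rcases mul_neg_iff.mp hk with ⟨hn2, hn1⟩ | ⟨hn2, hn1⟩
    · -- n(k+2) > 0, n(k+1) < 0 : B*A < 0
      have hBA : B * A < 0 := by
        rcases lt_or_gt_of_ne hBAne with h|h
        · exact h
        · exact absurd (hiff.mpr h) (by omega)
      have hBAle : B * A ≤ -|B| := by
        have habs : |B * A| = -(B*A) := abs_of_neg hBA
        linarith
      have hn2' : 1 ≤ n (k+2) := hn2
      have : B^2 + |B| ≤ qfun n (k+4) * B := by
        rw [hC]; nlinarith [sq_nonneg B, sq_abs B]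
      calc B^2 + |B| ≤ qfun n (k+4) * B := this
      _ ≤ |qfun n (k+4) * B| := le_abs_self _
    · -- n(k+2) < 0, n(k+1) > 0 : B*A > 0
      have hBA : 0 < B * A := hiff.mp hn1
      have hBAge : |B| ≤ B * A := by
        have habs : |B * A| = B*A := abs_of_pos hBA
        linarith
      have hn2' : n (k+2) ≤ -1 := by omega
      have : qfun n (k+4) * B ≤ -(B^2 + |B|) := by
        rw [hC]; nlinarith [sq_nonneg B, sq_abs B]
      calc B^2 + |B| ≤ -(qfun n (k+4) * B) := by linarith
      _ ≤ |qfun n (k+4) * B| := neg_le_abs _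
  rw [abs_mul] at key
  have hBpos : 0 < |B| := by omega
  have : (|B| + 1) * |B| ≤ |qfun n (k+4)| * |B| := by nlinarith [sq_abs B]
  exact le_of_mul_le_mul_right this hBpos

end ABCF

namespace ABCF

variable {a b x : ℝ}

lemma dig_h2 (ha : a ≤ 0) (hb : 0 ≤ b) (hab : 1 ≤ b - a) (hprod : -(a*b) ≤ 1)
    (hx : Irrational x) (k : ℕ) (h : dig a b x (k+2) = 1) : dig a b x (k+1) < 0 := by
  have ht1 : tse a b x (k+1) < 0 := (dig_pos_iff ha hb hab hprod hx (k+1)).mp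
    (by rw [show k+1+1 = k+2 from rfl]; omega)
  rcases lt_trichotomy (tse a b x k) 0 with h0 | h0 | h0
  · have := negneg_step ha hb hab hprod k h0 ht1; omega
  · exact absurd h0 (tse_ne_zero hx k)
  · have := (dig_neg_iff ha hb hab hprod hx k).mpr h0; omega

lemma dig_h3 (ha : a ≤ 0) (hb : 0 ≤ b) (hab : 1 ≤ b - a) (hprod : -(a*b) ≤ 1)
    (hx : Irrational x) (k : ℕ) (h : dig a b x (k+2) = -1) : 0 < dig a b x (k+1) := by
  have ht1 : 0 < tse a b x (k+1) := (dig_neg_iff ha hb hab hprod hx (k+1)).mp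
    (by rw [show k+1+1 = k+2 from rfl]; omega)
  rcases lt_trichotomy (tse a b x k) 0 with h0 | h0 | h0
  · have := (dig_pos_iff ha hb hab hprod hx k).mpr h0; omega
  · exact absurd h0 (tse_ne_zero hx k)
  · have := pospos_step ha hb hab hprod k h0 ht1; omega

/-- The three digit hypotheses, bundled for instantiating qinv/qgrow -/
lemma dig_hyps (ha : a ≤ 0) (hb : 0 ≤ b) (hab : 1 ≤ b - a) (hprod : -(a*b) ≤ 1)
    (hx : Irrational x) :
    (∀ k, dig a b x (k+1) ≠ 0) ∧ (∀ k, dig a b x (k+2) = 1 → dig a b x (k+1) < 0) ∧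
      (∀ k, dig a b x (k+2) = -1 → 0 < dig a b x (k+1)) :=
  ⟨dig_ne_zero ha hb hab hprod hx, dig_h2 ha hb hab hprod hx, dig_h3 ha hb hab hprod hx⟩

lemma Efun_one : Efun a b x 1 = -1 := by
  unfold Efun
  simp [pfun, qfun]

lemma Efun_two : Efun a b x 2 = tse a b x 0 := by
  have hq : qfun (dig a b x) 2 = 1 := by simp [qfun]
  have hp : pfun (dig a b x) 2 = dig a b x 0 := by
    show dig a b x 0 * pfun (dig a b x) 1 - pfun (dig a b x) 0 = dig a b x 0
    simp [pfun]
  unfold Efun tse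
  rw [hq, hp]
  have h0 : xseq a b x 0 = x := rfl
  rw [h0]
  push_cast
  ring

lemma Efun_rec (hx : Irrational x) :
    ∀ k, Efun a b x (k+2) = -(tse a b x k) * Efun a b x (k+1) := by
  intro k
  induction k with
  | zero => rw [Efun_two, Efun_one]; ring
  | succ k ih =>
    have hstep : Efun a b x (k+3) =
        (dig a b x (k+1) : ℝ) * Efun a b x (k+2) - Efun a b x (k+1) := by
      unfold Efun
      have hp : pfun (dig a b x) (k+3) = dig a b x (k+1) * pfun (dig a b x) (k+2) - pfun (dig a b x) (k+1) := rfl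
      have hq : qfun (dig a b x) (k+3) = dig a b x (k+1) * qfun (dig a b x) (k+2) - qfun (dig a b x) (k+1) := rfl
      rw [hp, hq]; push_cast; ring
    have htk : tse a b x k ≠ 0 := tse_ne_zero hx k
    have hE1 : Efun a b x (k+1) = -Efun a b x (k+2) / tse a b x k := by
      rw [ih]; field_simp
    have hX : xseq a b x (k+1) = -1 / tse a b x k := xseq_succ k
    have ht1 : tse a b x (k+1) = -1 / tse a b x k - (dig a b x (k+1) : ℝ) := by
      show xseq a b x (k+1) - (dig a b x (k+1) : ℝ) = _
      rw [hX]
    show Efun a b x (k+3) = -(tse a b x (k+1)) * Efun a b x (k+2)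
    rw [hstep, hE1, ht1]
    field_simp
    ring

lemma Efun_ne (hx : Irrational x) : ∀ k, Efun a b x (k+1) ≠ 0 := by
  intro k
  induction k with
  | zero => rw [Efun_one]; norm_num
  | succ k ih =>
    rw [Efun_rec hx k]
    exact mul_ne_zero (neg_ne_zero.mpr (tse_ne_zero hx k)) ih

lemma Efun_det : ∀ k, Efun a b x (k+2) * (qfun (dig a b x) (k+1) : ℝ)
    - Efun a b x (k+1) * (qfun (dig a b x) (k+2) : ℝ) = 1 := by
  intro k
  have h := qdet (dig a b x) k
  unfold Efun
  have : ((pfun (dig a b x) (k+1) * qfun (dig a b x) (k+2)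
      - pfun (dig a b x) (k+2) * qfun (dig a b x) (k+1) : ℤ) : ℝ) = 1 := by
    rw [h]; norm_num
  push_cast at this ⊢
  linarith [this]

end ABCF

namespace ABCF

variable {a b x : ℝ}

/-- A_k = |q_k x - p_k| / |q_k| = |x - p_k/q_k| -/
noncomputable def Afun (a b x : ℝ) (k : ℕ) : ℝ :=
  |Efun a b x (k+2)| / |((qfun (dig a b x) (k+2) : ℤ) : ℝ)|

lemma tse_abs_le (hab : 1 ≤ b - a) (i : ℕ) :
    |tse a b x i| ≤ max 1 (max b (-a)) := by
  have h1 : -a ≤ max 1 (max b (-a)) := le_trans (le_max_right b (-a)) (le_max_right 1 _)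
  have h2 : b ≤ max 1 (max b (-a)) := le_trans (le_max_left b (-a)) (le_max_right 1 _)
  exact abs_le.mpr ⟨by linarith [(tse_mem (x := x) hab i).1], by linarith [(tse_mem (x := x) hab i).2]⟩

lemma Qr_one_le (ha : a ≤ 0) (hb : 0 ≤ b) (hab : 1 ≤ b - a) (hprod : -(a*b) ≤ 1)
    (hx : Irrational x) (k : ℕ) : (1:ℝ) ≤ |((qfun (dig a b x) (k+2) : ℤ) : ℝ)| := by
  obtain ⟨hd1, hd2, hd3⟩ := dig_hyps ha hb hab hprod hx
  exact_mod_cast (qinv (dig a b x) hd1 hd2 hd3 k).1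

lemma Q_mono (ha : a ≤ 0) (hb : 0 ≤ b) (hab : 1 ≤ b - a) (hprod : -(a*b) ≤ 1)
    (hx : Irrational x) : Monotone (fun k => |qfun (dig a b x) (k+2)|) := by
  obtain ⟨hd1, hd2, hd3⟩ := dig_hyps ha hb hab hprod hx
  apply monotone_nat_of_le_succ
  intro k
  exact (qinv (dig a b x) hd1 hd2 hd3 k).2.1

lemma Efun_rec_abs (hx : Irrational x) (k : ℕ) :
    |Efun a b x (k+3)| = |tse a b x (k+1)| * |Efun a b x (k+2)| := by
  have h := Efun_rec (a := a) (b := b) hx (k+1)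
  rw [show k+1+2 = k+3 from rfl, show k+1+1 = k+2 from rfl] at h
  rw [h, abs_mul, abs_neg]

/-- same-sign step: A_{k+1} ≤ A_k -/
lemma step_le (ha : a ≤ 0) (hb : 0 ≤ b) (hab : 1 ≤ b - a) (hprod : -(a*b) ≤ 1)
    (hx : Irrational x) (j : ℕ) (h : 0 < tse a b x (j+1) * tse a b x j) :
    Afun a b x (j+1) ≤ Afun a b x j := by
  have hts : |tse a b x (j+1)| ≤ 1 := same_sign_small ha hb hab hprod j h
  have hnum : |Efun a b x (j+3)| ≤ |Efun a b x (j+2)| := by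
    rw [Efun_rec_abs hx j]
    nlinarith [abs_nonneg (Efun a b x (j+2)), abs_nonneg (tse a b x (j+1))]
  have hden : |((qfun (dig a b x) (j+2) : ℤ) : ℝ)| ≤ |((qfun (dig a b x) (j+3) : ℤ) : ℝ)| := by
    have := Q_mono ha hb hab hprod hx (le_of_lt (Nat.lt_succ_self j))
    exact_mod_cast this
  unfold Afun
  rw [show j+1+2 = j+3 from rfl]
  exact div_le_div₀ (abs_nonneg _) hnum
    (lt_of_lt_of_le one_pos (Qr_one_le ha hb hab hprod hx j)) hden

/-- sign-change step: A_{j+1} ≤ M / |q_{j+1}| -/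
lemma sc_bound (ha : a ≤ 0) (hb : 0 ≤ b) (hab : 1 ≤ b - a) (hprod : -(a*b) ≤ 1)
    (hx : Irrational x) (j : ℕ) (h : tse a b x (j+1) * tse a b x j < 0) :
    Afun a b x (j+1) ≤ max 1 (max b (-a)) / |((qfun (dig a b x) (j+3) : ℤ) : ℝ)| := by
  obtain ⟨hd1, hd2, hd3⟩ := dig_hyps ha hb hab hprod hx
  set M := max 1 (max b (-a)) with hM
  set Q2 := ((qfun (dig a b x) (j+2) : ℤ) : ℝ) with hQ2
  set Q3 := ((qfun (dig a b x) (j+3) : ℤ) : ℝ) with hQ3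
  have hdet := Efun_det (a := a) (b := b) (x := x) (j+1)
  rw [show j+1+2 = j+3 from rfl, show j+1+1 = j+2 from rfl] at hdet
  -- hdet : Efun (j+3) * Q2 - Efun (j+2) * Q3 = 1
  have hiff := (qinv (dig a b x) hd1 hd2 hd3 j).2.2
  have hrec := Efun_rec_abs (a := a) (b := b) hx j
  have hErec := Efun_rec (a := a) (b := b) hx (j+1)
  rw [show j+1+2 = j+3 from rfl, show j+1+1 = j+2 from rfl] at hErec
  -- product of the two bilinear terms is ≤ 0
  have hprod0 : (Efun a b x (j+3) * Q2) * (Efun a b x (j+2) * Q3) ≤ 0 := by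
    have hexp : (Efun a b x (j+3) * Q2) * (Efun a b x (j+2) * Q3)
        = -(tse a b x (j+1)) * (Efun a b x (j+2))^2 * (Q3 * Q2) := by
      rw [hErec]; ring
    rw [hexp]
    rcases mul_neg_iff.mp h with ⟨hp1, hn0⟩ | ⟨hn1, hp0⟩
    · -- t_{j+1} > 0, t_j < 0 : digit (j+1) ≥ 1, so Q3*Q2 > 0
      have hd : 1 ≤ dig a b x (j+1) := (dig_pos_iff ha hb hab hprod hx j).mpr hn0
      have hq : (0:ℤ) < qfun (dig a b x) (j+3) * qfun (dig a b x) (j+2) :=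
        hiff.mp (by omega)
      have hqr : (0:ℝ) < Q3 * Q2 := by rw [hQ3, hQ2]; exact_mod_cast hq
      nlinarith [mul_nonneg (mul_nonneg hp1.le (sq_nonneg (Efun a b x (j+2)))) hqr.le]
    · -- t_{j+1} < 0, t_j > 0 : digit (j+1) ≤ -1, so Q3*Q2 ≤ 0
      have hd : dig a b x (j+1) ≤ -1 := (dig_neg_iff ha hb hab hprod hx j).mpr hp0
      have hq : qfun (dig a b x) (j+3) * qfun (dig a b x) (j+2) ≤ 0 := by
        by_contra hc
        have := hiff.mpr (by omega : (0:ℤ) < qfun (dig a b x) (j+3) * qfun (dig a b x) (j+2))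
        omega
      have hqr : Q3 * Q2 ≤ (0:ℝ) := by rw [hQ3, hQ2]; exact_mod_cast hq
      nlinarith [mul_nonpos_iff.mpr (Or.inl ⟨mul_nonneg (neg_nonneg.mpr hn1.le)
        (sq_nonneg (Efun a b x (j+2))), hqr⟩)]
  -- hence |E_{j+2} Q3| ≤ 1
  have hB : |Efun a b x (j+2) * Q3| ≤ 1 := by
    set A' := Efun a b x (j+3) * Q2
    set B' := Efun a b x (j+2) * Q3
    have h1 : A' = B' + 1 := by linarith [hdet]
    rw [h1] at hprod0
    have hB1 : -1 ≤ B' := by nlinarith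
    have hB2 : B' ≤ 0 := by nlinarith
    rw [abs_le]; constructor <;> linarith
  have hQ3one : (1:ℝ) ≤ |Q3| := Qr_one_le ha hb hab hprod hx (j+1)
  have hQ3pos : (0:ℝ) < |Q3| := lt_of_lt_of_le one_pos hQ3one
  have hE2 : |Efun a b x (j+2)| ≤ 1 / |Q3| := by
    rw [abs_mul] at hB
    rw [le_div_iff₀ hQ3pos]
    exact hB
  have hM1 : (0:ℝ) ≤ M := le_trans zero_le_one (le_max_left _ _)
  have hnum : |Efun a b x (j+3)| ≤ M / |Q3| := by
    rw [hrec]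
    calc |tse a b x (j+1)| * |Efun a b x (j+2)| ≤ M * (1 / |Q3|) := by
          apply mul_le_mul (tse_abs_le hab (j+1)) hE2 (abs_nonneg _) hM1
    _ = M / |Q3| := by ring
  have : Afun a b x (j+1) ≤ (M / |Q3|) / |Q3| := by
    unfold Afun
    rw [show j+1+2 = j+3 from rfl]
    exact div_le_div₀ (by positivity) hnum hQ3pos le_rfl
  refine le_trans this ?_
  rw [div_div]
  apply div_le_div_of_nonneg_left hM1 hQ3pos
  nlinarith

end ABCF

namespace ABCF

variable {a b x : ℝ}

lemma Afun_nonneg (k : ℕ) : 0 ≤ Afun a b x k :=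
  div_nonneg (abs_nonneg _) (abs_nonneg _)

lemma sc_dig (ha : a ≤ 0) (hb : 0 ≤ b) (hab : 1 ≤ b - a) (hprod : -(a*b) ≤ 1)
    (hx : Irrational x) (j : ℕ) (h : tse a b x (j+1) * tse a b x j < 0) :
    dig a b x (j+2) * dig a b x (j+1) < 0 := by
  rcases mul_neg_iff.mp h with ⟨hp1, hn0⟩ | ⟨hn1, hp0⟩
  · have h2 : dig a b x (j+2) ≤ -1 := by
      have := (dig_neg_iff ha hb hab hprod hx (j+1)).mpr hp1
      rwa [show j+1+1 = j+2 from rfl] at this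
    have h1 : 1 ≤ dig a b x (j+1) := (dig_pos_iff ha hb hab hprod hx j).mpr hn0
    exact mul_neg_of_neg_of_pos (by omega) (by omega)
  · have h2 : 1 ≤ dig a b x (j+2) := by
      have := (dig_pos_iff ha hb hab hprod hx (j+1)).mpr hn1
      rwa [show j+1+1 = j+2 from rfl] at this
    have h1 : dig a b x (j+1) ≤ -1 := (dig_neg_iff ha hb hab hprod hx j).mpr hp0
    exact mul_neg_of_pos_of_neg (by omega) (by omega)

lemma last_sc (ha : a ≤ 0) (hb : 0 ≤ b) (hab : 1 ≤ b - a) (hprod : -(a*b) ≤ 1)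
    (hx : Irrational x) (j : ℕ) (hsc : tse a b x (j+1) * tse a b x j < 0) :
    ∀ k, j + 1 ≤ k → Afun a b x k ≤ max 1 (max b (-a)) / |((qfun (dig a b x) (j+3) : ℤ) : ℝ)| := by
  intro k hk
  induction k, hk using Nat.le_induction with
  | base => exact sc_bound ha hb hab hprod hx j hsc
  | succ k hk ih =>
    have hM0 : (0:ℝ) ≤ max 1 (max b (-a)) := le_trans zero_le_one (le_max_left _ _)
    have hQj : (0:ℝ) < |((qfun (dig a b x) (j+3) : ℤ) : ℝ)| :=
      lt_of_lt_of_le one_pos (Qr_one_le ha hb hab hprod hx (j+1))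
    rcases lt_trichotomy (tse a b x (k+1) * tse a b x k) 0 with h | h | h
    · refine le_trans (sc_bound ha hb hab hprod hx k h) ?_
      apply div_le_div_of_nonneg_left hM0 hQj
      have : |qfun (dig a b x) (j+1+2)| ≤ |qfun (dig a b x) (k+1+2)| :=
        Q_mono ha hb hab hprod hx (by omega : j+1 ≤ k+1)
      rw [show j+1+2 = j+3 from rfl, show k+1+2 = k+3 from rfl] at this
      exact_mod_cast this
    · exact absurd h (mul_ne_zero (tse_ne_zero hx (k+1)) (tse_ne_zero hx k))
    · exact le_trans (step_le ha hb hab hprod hx k h) ih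

lemma scq_unbounded (ha : a ≤ 0) (hb : 0 ≤ b) (hab : 1 ≤ b - a) (hprod : -(a*b) ≤ 1)
    (hx : Irrational x)
    (hSC : ∀ J, ∃ j, J ≤ j ∧ tse a b x (j+1) * tse a b x j < 0) :
    ∀ m : ℕ, ∃ j, tse a b x (j+1) * tse a b x j < 0 ∧ (m:ℤ) ≤ |qfun (dig a b x) (j+3)| := by
  obtain ⟨hd1, hd2, hd3⟩ := dig_hyps ha hb hab hprod hx
  intro m
  induction m with
  | zero =>
    obtain ⟨j, _, hsc⟩ := hSC 0
    exact ⟨j, hsc, by positivity⟩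
  | succ m ih =>
    obtain ⟨j, hsc, hq⟩ := ih
    obtain ⟨j', hj', hsc'⟩ := hSC (j+1)
    refine ⟨j', hsc', ?_⟩
    have hgrow := qgrow (dig a b x) hd1 hd2 hd3 j (sc_dig ha hb hab hprod hx j hsc)
    have hmono : |qfun (dig a b x) (j+2+2)| ≤ |qfun (dig a b x) (j'+1+2)| :=
      Q_mono ha hb hab hprod hx (by omega : j+2 ≤ j'+1)
    rw [show j+2+2 = j+4 from rfl, show j'+1+2 = j'+3 from rfl] at hmono
    push_cast
    omega

lemma mono_bdd_const (g : ℕ → ℤ) (mono : Monotone g) (m : ℤ) (hbd : ∀ k, g k ≤ m) :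
    ∃ K, ∀ k, K ≤ k → g k = g K := by
  by_contra hcon
  push_neg at hcon
  have claim : ∀ p : ℕ, ∃ k, g 0 + p ≤ g k := by
    intro p
    induction p with
    | zero => exact ⟨0, by simp⟩
    | succ p ih =>
      obtain ⟨k, hk⟩ := ih
      obtain ⟨k', hk', hne⟩ := hcon k
      have : g k < g k' := lt_of_le_of_ne (mono hk') (Ne.symm hne)
      exact ⟨k', by push_cast; omega⟩
  obtain ⟨k, hk⟩ := claim (m - g 0 + 1).toNat
  have := hbd k
  have h2 : (m - g 0 + 1) ≤ ((m - g 0 + 1).toNat : ℤ) := Int.self_le_toNat _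
  omega

end ABCF

namespace ABCF

variable {a b x : ℝ}

set_option maxHeartbeats 1600000 in
lemma Afun_tendsto (ha : a ≤ 0) (hb : 0 ≤ b) (hab : 1 ≤ b - a) (hprod : -(a*b) ≤ 1)
    (hx : Irrational x) : Tendsto (Afun a b x) atTop (𝓝 0) := by
  obtain ⟨hd1, hd2, hd3⟩ := dig_hyps ha hb hab hprod hx
  rw [Metric.tendsto_atTop]
  intro ε hε
  have hM0 : (0:ℝ) < max 1 (max b (-a)) := lt_of_lt_of_le one_pos (le_max_left _ _)
  by_cases hSC : ∀ J, ∃ j, J ≤ j ∧ tse a b x (j+1) * tse a b x j < 0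
  · -- Case A : infinitely many sign changes
    obtain ⟨m, hm⟩ := exists_nat_gt (max 1 (max b (-a)) / ε)
    obtain ⟨j, hsc, hq⟩ := scq_unbounded ha hb hab hprod hx hSC (m+1)
    refine ⟨j+1, fun k hk => ?_⟩
    rw [Real.dist_eq, sub_zero, abs_of_nonneg (Afun_nonneg k)]
    have hQj : ((m:ℝ)+1) ≤ |((qfun (dig a b x) (j+3) : ℤ) : ℝ)| := by
      rw [← Int.cast_abs]
      exact_mod_cast hq
    have hm1 : (0:ℝ) < (m:ℝ)+1 := by positivity
    calc Afun a b x k ≤ max 1 (max b (-a)) / |((qfun (dig a b x) (j+3) : ℤ) : ℝ)| :=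
          last_sc ha hb hab hprod hx j hsc k hk
    _ ≤ max 1 (max b (-a)) / ((m:ℝ)+1) := div_le_div_of_nonneg_left hM0.le hm1 hQj
    _ < ε := by
        rw [div_lt_iff₀ hm1]
        nlinarith [(div_lt_iff₀ hε).mp hm]
  · push_neg at hSC
    obtain ⟨J, hJ⟩ := hSC
    have hpos : ∀ j, J ≤ j → 0 < tse a b x (j+1) * tse a b x j := by
      intro j hj
      exact lt_of_le_of_ne (hJ j hj)
        (Ne.symm (mul_ne_zero (tse_ne_zero hx (j+1)) (tse_ne_zero hx j)))
    have hEdec : ∀ k, J ≤ k → |Efun a b x (k+2)| ≤ |Efun a b x (J+2)| := by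
      intro k hk
      induction k, hk using Nat.le_induction with
      | base => exact le_rfl
      | succ k hk ih =>
        have hts : |tse a b x (k+1)| ≤ 1 := same_sign_small ha hb hab hprod k (hpos k hk)
        have hre := Efun_rec_abs (a := a) (b := b) hx k
        rw [show k+1+2 = k+3 from rfl, hre]
        nlinarith [abs_nonneg (Efun a b x (k+2)), abs_nonneg (tse a b x (k+1))]
    by_cases hUB : ∀ m : ℤ, ∃ k, m ≤ |qfun (dig a b x) (k+2)|
    · -- q unbounded
      set C0 := |Efun a b x (J+2)| with hC0
      have hC0nn : 0 ≤ C0 := abs_nonneg _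
      obtain ⟨m, hm⟩ := exists_nat_gt (C0 / ε)
      obtain ⟨k0, hk0⟩ := hUB ((m:ℤ)+1)
      refine ⟨max k0 J, fun k hk => ?_⟩
      rw [Real.dist_eq, sub_zero, abs_of_nonneg (Afun_nonneg k)]
      have hkJ : J ≤ k := le_trans (le_max_right _ _) hk
      have hkk0 : k0 ≤ k := le_trans (le_max_left _ _) hk
      have hden : ((m:ℝ)+1) ≤ |((qfun (dig a b x) (k+2) : ℤ) : ℝ)| := by
        rw [← Int.cast_abs]
        exact_mod_cast le_trans hk0 (Q_mono ha hb hab hprod hx hkk0)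
      have hm1 : (0:ℝ) < (m:ℝ)+1 := by positivity
      calc Afun a b x k ≤ C0 / ((m:ℝ)+1) := div_le_div₀ hC0nn (hEdec k hkJ) hm1 hden
      _ < ε := by
          rw [div_lt_iff₀ hm1]
          nlinarith [(div_lt_iff₀ hε).mp hm]
    · -- q bounded : contradiction
      exfalso
      push_neg at hUB
      obtain ⟨m, hmb⟩ := hUB
      obtain ⟨K, hK⟩ := mono_bdd_const (fun k => |qfun (dig a b x) (k+2)|)
        (Q_mono ha hb hab hprod hx) m (fun k => (hmb k).le)
      have hK' : ∀ k, K ≤ k → |qfun (dig a b x) (k+2)| = |qfun (dig a b x) (K+2)| := hK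
      set c := |qfun (dig a b x) (K+2)| with hc
      have hc1 : (1:ℤ) ≤ c := (qinv (dig a b x) hd1 hd2 hd3 K).1
      set L := max K (J+1) with hL
      have habs2 : ∀ i, L ≤ i → |dig a b x (i+2)| ≤ 2 := by
        intro i hi
        have hiK : K ≤ i := le_trans (le_max_left _ _) hi
        have e0 : |qfun (dig a b x) (i+2)| = c := hK' i hiK
        have e1 : |qfun (dig a b x) (i+1+2)| = c := hK' (i+1) (by omega)
        have e2 : |qfun (dig a b x) (i+2+2)| = c := hK' (i+2) (by omega)
        rw [show i+1+2 = i+3 from rfl] at e1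
        rw [show i+2+2 = i+4 from rfl] at e2
        have hrec : dig a b x (i+2) * qfun (dig a b x) (i+3) =
            qfun (dig a b x) (i+4) + qfun (dig a b x) (i+2) := by
          have h4 : qfun (dig a b x) (i+4) = dig a b x (i+2) * qfun (dig a b x) (i+3)
              - qfun (dig a b x) (i+2) := rfl
          omega
        have htri : |dig a b x (i+2) * qfun (dig a b x) (i+3)| ≤ 2*c := by
          rw [hrec]
          calc |qfun (dig a b x) (i+4) + qfun (dig a b x) (i+2)|
              ≤ |qfun (dig a b x) (i+4)| + |qfun (dig a b x) (i+2)| := abs_add_le _ _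
          _ = 2*c := by omega
        rw [abs_mul, e1] at htri
        nlinarith [abs_nonneg (dig a b x (i+2))]
      rcases (tse_ne_zero hx J).lt_or_gt with hJneg | hJpos
      · -- all t eventually negative : digits eventually 2
        have tnegs : ∀ j, J ≤ j → tse a b x j < 0 := by
          intro j hj
          induction j, hj using Nat.le_induction with
          | base => exact hJneg
          | succ j hj ih =>
            rcases (tse_ne_zero hx (j+1)).lt_or_gt with h | h
            · exact h
            · exfalso; nlinarith [hpos j hj]
        have dig2 : ∀ i, L ≤ i → dig a b x (i+2) = 2 := by
          intro i hi
          have h1 : 2 ≤ dig a b x (i+2) :=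
            negneg_step ha hb hab hprod i (tnegs i (by omega)) (tnegs (i+1) (by omega))
          have h2 := abs_le.mp (habs2 i hi)
          omega
        have trec : ∀ i, L ≤ i → tse a b x (i+2) = -1 / tse a b x (i+1) - 2 := by
          intro i hi
          have hX : xseq a b x (i+2) = -1 / tse a b x (i+1) := by
            have h' := xseq_succ (a := a) (b := b) (x := x) (i+1)
            rwa [show i+1+1 = i+2 from rfl] at h'
          have ht : tse a b x (i+2) = xseq a b x (i+2) - (dig a b x (i+2) : ℝ) := rfl
          rw [ht, hX, dig2 i hi]
          norm_num
        have sbound : ∀ i, L ≤ i → -1 < tse a b x (i+1) := by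
          intro i hi
          have hlb := (neg_step ha hb hab hprod i (tnegs i (by omega))).2.2.2
          have hne : tse a b x (i+1) ≠ -1 := by
            have h' := (tse_irr (a := a) (b := b) hx (i+1)).ne_int (-1)
            simpa using h'
          rcases lt_or_eq_of_le (by linarith : (-1:ℝ) ≤ tse a b x (i+1)) with h | h
          · exact h
          · exact absurd h.symm hne
        have sgrow : ∀ i, L ≤ i →
            1 + tse a b x (i+1) + (1 + tse a b x (i+1))^2 ≤ 1 + tse a b x (i+2) := by
          intro i hi
          have ht1 : tse a b x (i+1) < 0 := tnegs (i+1) (by omega)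
          have ht1' : -1 < tse a b x (i+1) := sbound i hi
          have htne : tse a b x (i+1) ≠ 0 := tse_ne_zero hx (i+1)
          have key : (1 + tse a b x (i+2)) * (-(tse a b x (i+1))) = 1 + tse a b x (i+1) := by
            rw [trec i hi]; field_simp; ring
          have hs : 0 < 1 + tse a b x (i+1) := by linarith
          have hpos2 : 0 < -(tse a b x (i+1)) := by linarith
          nlinarith [key, hs, hpos2, mul_pos hs (mul_pos hs hs)]
        have smono : ∀ p : ℕ,
            1 + tse a b x (L+1) + p * (1 + tse a b x (L+1))^2 ≤ 1 + tse a b x (L+1+p) := by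
          intro p
          induction p with
          | zero => simp
          | succ p ih =>
            have hgrow := sgrow (L+p) (by omega)
            rw [show L+p+1 = L+1+p by omega, show L+p+2 = L+1+p+1 by omega] at hgrow
            have hsL : 0 < 1 + tse a b x (L+1) := by linarith [sbound L le_rfl]
            have hgeq : 1 + tse a b x (L+1) ≤ 1 + tse a b x (L+1+p) := by
              nlinarith [ih, sq_nonneg (1 + tse a b x (L+1)), Nat.cast_nonneg (α := ℝ) p]
            have hsq : (1 + tse a b x (L+1))^2 ≤ (1 + tse a b x (L+1+p))^2 := by
              nlinarith [hgeq, hsL]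
            rw [show L+1+(p+1) = L+1+p+1 by omega]
            push_cast
            linarith [ih, hgrow, hsq]
        obtain ⟨p, hp⟩ :=
          exists_nat_gt ((1 - (1 + tse a b x (L+1))) / (1 + tse a b x (L+1))^2)
        have hsL : 0 < 1 + tse a b x (L+1) := by linarith [sbound L le_rfl]
        have hneg := tnegs (L+1+p) (by omega)
        have hsm := smono p
        have hsq : 0 < (1 + tse a b x (L+1))^2 := by positivity
        rw [div_lt_iff₀ hsq] at hp
        nlinarith [hsm, hp, hneg]
      · -- all t eventually positive : digits eventually -2
        have tposs : ∀ j, J ≤ j → 0 < tse a b x j := by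
          intro j hj
          induction j, hj using Nat.le_induction with
          | base => exact hJpos
          | succ j hj ih =>
            rcases (tse_ne_zero hx (j+1)).lt_or_gt with h | h
            · exfalso; nlinarith [hpos j hj]
            · exact h
        have dig2 : ∀ i, L ≤ i → dig a b x (i+2) = -2 := by
          intro i hi
          have h1 : dig a b x (i+2) ≤ -2 :=
            pospos_step ha hb hab hprod i (tposs i (by omega)) (tposs (i+1) (by omega))
          have h2 := abs_le.mp (habs2 i hi)
          omega
        have trec : ∀ i, L ≤ i → tse a b x (i+2) = -1 / tse a b x (i+1) + 2 := by
          intro i hi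
          have hX : xseq a b x (i+2) = -1 / tse a b x (i+1) := by
            have h' := xseq_succ (a := a) (b := b) (x := x) (i+1)
            rwa [show i+1+1 = i+2 from rfl] at h'
          have ht : tse a b x (i+2) = xseq a b x (i+2) - (dig a b x (i+2) : ℝ) := rfl
          rw [ht, hX, dig2 i hi]
          norm_num
        have sbound : ∀ i, L ≤ i → tse a b x (i+1) < 1 := by
          intro i hi
          have hub := (pos_step ha hb hab hprod i (tposs i (by omega))).2.2.2.1
          linarith
        have sgrow : ∀ i, L ≤ i →
            1 - tse a b x (i+1) + (1 - tse a b x (i+1))^2 ≤ 1 - tse a b x (i+2) := by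
          intro i hi
          have ht1 : 0 < tse a b x (i+1) := tposs (i+1) (by omega)
          have ht1' : tse a b x (i+1) < 1 := sbound i hi
          have htne : tse a b x (i+1) ≠ 0 := tse_ne_zero hx (i+1)
          have key : (1 - tse a b x (i+2)) * (tse a b x (i+1)) = 1 - tse a b x (i+1) := by
            rw [trec i hi]; field_simp; ring
          have hs : 0 < 1 - tse a b x (i+1) := by linarith
          nlinarith [key, hs, ht1, mul_pos hs (mul_pos hs hs)]
        have smono : ∀ p : ℕ,
            1 - tse a b x (L+1) + p * (1 - tse a b x (L+1))^2 ≤ 1 - tse a b x (L+1+p) := by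
          intro p
          induction p with
          | zero => simp
          | succ p ih =>
            have hgrow := sgrow (L+p) (by omega)
            rw [show L+p+1 = L+1+p by omega, show L+p+2 = L+1+p+1 by omega] at hgrow
            have hsL : 0 < 1 - tse a b x (L+1) := by linarith [sbound L le_rfl]
            have hgeq : 1 - tse a b x (L+1) ≤ 1 - tse a b x (L+1+p) := by
              nlinarith [ih, sq_nonneg (1 - tse a b x (L+1)), Nat.cast_nonneg (α := ℝ) p]
            have hsq : (1 - tse a b x (L+1))^2 ≤ (1 - tse a b x (L+1+p))^2 := by
              nlinarith [hgeq, hsL]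
            rw [show L+1+(p+1) = L+1+p+1 by omega]
            push_cast
            linarith [ih, hgrow, hsq]
        obtain ⟨p, hp⟩ :=
          exists_nat_gt ((1 - (1 - tse a b x (L+1))) / (1 - tse a b x (L+1))^2)
        have hsL : 0 < 1 - tse a b x (L+1) := by linarith [sbound L le_rfl]
        have hposL := tposs (L+1+p) (by omega)
        have hsm := smono p
        have hsq : 0 < (1 - tse a b x (L+1))^2 := by positivity
        rw [div_lt_iff₀ hsq] at hp
        nlinarith [hsm, hp, hposL]

end ABCF

theorem convergents_tendsto (a b x : ℝ) (ha : a ≤ 0) (hb : 0 ≤ b)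
    (hab : 1 ≤ b - a) (hprod : -(a * b) ≤ 1) (hx : Irrational x) :
    Tendsto (fun k : ℕ =>
        (pfun (dig a b x) (k + 2) : ℝ) / (qfun (dig a b x) (k + 2) : ℝ))
      atTop (𝓝 x) := by
  have hA := ABCF.Afun_tendsto ha hb hab hprod hx
  rw [tendsto_iff_dist_tendsto_zero]
  have heq : (fun k : ℕ =>
      dist ((pfun (dig a b x) (k+2) : ℝ) / (qfun (dig a b x) (k+2) : ℝ)) x)
      = ABCF.Afun a b x := by
    funext k
    obtain ⟨hd1, hd2, hd3⟩ := ABCF.dig_hyps ha hb hab hprod hx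
    have hq1 : (1:ℤ) ≤ |qfun (dig a b x) (k+2)| := (ABCF.qinv _ hd1 hd2 hd3 k).1
    have hqne : ((qfun (dig a b x) (k+2) : ℤ) : ℝ) ≠ 0 := by
      have h0 : qfun (dig a b x) (k+2) ≠ 0 :=
        abs_pos.mp (lt_of_lt_of_le Int.zero_lt_one hq1)
      exact_mod_cast h0
    have h1 : (pfun (dig a b x) (k+2) : ℝ) / (qfun (dig a b x) (k+2) : ℝ) - x
        = -((qfun (dig a b x) (k+2) : ℝ) * x - (pfun (dig a b x) (k+2) : ℝ))
          / (qfun (dig a b x) (k+2) : ℝ) := by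
      field_simp
      ring
    rw [Real.dist_eq, h1, abs_div, abs_neg]
    rfl
  rw [heq]
  exact hA
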